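/- For every m ≥ 1 and all real parameters α and β, the Markov chain M on 𝔐²_m is irreducible and aperiodic, and it is reversible with respect to the Gibbs distribution π(x) = e^{−E(x)}/Z, where Z = Σ_{y∈𝔐²_m} e^{−E(y)}; in particular, π is the unique stationary distribution of M. -/

import Mathlib

open Finset

/-- The four symbols of a 2-Motzkin path: up-step `U`, two colors of
horizontal steps `H` and `I`, and down-step `D`. -/
inductive MSym : Type
  | U | H | I | D
  deriving DecidableEq

instance : Fintype MSym where
  elems := {MSym.U, MSym.H, MSym.I, MSym.D}
  complete := fun x => by cases x <;> simp

/-- `symCount x a` is `|x|_a`, the number of occurrences of the symbol `a` in `x`. -/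
def symCount {m : ℕ} (x : Fin m → MSym) (a : MSym) : ℕ :=
  (Finset.univ.filter (fun i => x i = a)).card

/-- the number of occurrences of `a` among the first `j+1` symbols of `x`. -/
def symCountPrefix {m : ℕ} (x : Fin m → MSym) (a : MSym) (j : Fin m) : ℕ :=
  (Finset.univ.filter (fun i => i ≤ j ∧ x i = a)).card

/-- `x` is a 2-Motzkin path: no prefix has more `D`s than `U`s, and the
total number of `U`s equals the total number of `D`s. -/
def IsMotzkin2 {m : ℕ} (x : Fin m → MSym) : Prop :=
  (∀ j : Fin m, symCountPrefix x MSym.D j ≤ symCountPrefix x MSym.U j) ∧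
    symCount x MSym.U = symCount x MSym.D

instance {m : ℕ} : DecidablePred (IsMotzkin2 (m := m)) := fun _ => by
  unfold IsMotzkin2; infer_instance

/-- `𝔐²_m` : the set of 2-Motzkin paths of length `m`. -/
abbrev Motzkin2 (m : ℕ) : Type := {x : Fin m → MSym // IsMotzkin2 x}

/-- The energy `E(x) = α(|x|_U + |x|_H + 1) + β |x|_I`. -/
noncomputable def energy (α β : ℝ) {m : ℕ} (x : Fin m → MSym) : ℝ :=
  α * ((symCount x MSym.U : ℝ) + (symCount x MSym.H : ℝ) + 1) + β * (symCount x MSym.I : ℝ)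

/-- pairs of consecutive positions `(i, i+1)`. -/
def adjPairs (m : ℕ) : Finset (Fin m × Fin m) :=
  Finset.univ.filter (fun p => (p.2 : ℕ) = (p.1 : ℕ) + 1)

/-- The string `x` with the symbols `a`, `b` placed at positions `i`, `j`. -/
def setTwo {m : ℕ} (x : Fin m → MSym) (i j : Fin m) (a b : MSym) : Fin m → MSym :=
  Function.update (Function.update x i a) j b

def isUD (a : MSym) : Prop := a = MSym.U ∨ a = MSym.D
def isHI (a : MSym) : Prop := a = MSym.H ∨ a = MSym.I
instance : DecidablePred isUD := fun a => by unfold isUD; infer_instance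
instance : DecidablePred isHI := fun a => by unfold isHI; infer_instance

/-- The probability of moving from `x` to a *different* string `y` in one step
of the chain `M`: with probability 1/4 each, one of the four kinds of moves is
proposed (a uniformly random choice of positions together with the indicated
coin flips), and an (automatically valid) proposal `y ≠ x` is accepted with
probability 1/2. -/
noncomputable def stepWeight (α β : ℝ) {m : ℕ} (x y : Fin m → MSym) : ℝ :=
  -- move 1 : UD ↔ HH at a random pair of consecutive positions
  (1/4) * (1/((m : ℝ) - 1)) * (1/2) *
    (∑ p ∈ adjPairs m,
      ((if x p.1 = MSym.U ∧ x p.2 = MSym.D ∧ y = setTwo x p.1 p.2 MSym.H MSym.H then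
          Real.exp (-α) / (1 + Real.exp (-α)) else 0) +
       (if x p.1 = MSym.H ∧ x p.2 = MSym.H ∧ y = setTwo x p.1 p.2 MSym.U MSym.D then
          1 / (1 + Real.exp (-α)) else 0)))
  -- move 2 : H ↔ I at a random position
  + (1/4) * (1/(m : ℝ)) * (1/2) *
    (∑ i : Fin m,
      ((if x i = MSym.I ∧ y = Function.update x i MSym.H then
          Real.exp (-α) / (Real.exp (-α) + Real.exp (-β)) else 0) +
       (if x i = MSym.H ∧ y = Function.update x i MSym.I then
          Real.exp (-β) / (Real.exp (-α) + Real.exp (-β)) else 0)))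
  -- move 3 : swap the symbols at two uniform random positions, both in {U, D}
  + (1/4) * (1/((m : ℝ) * (m : ℝ))) * (1/2) *
    (∑ p : Fin m × Fin m,
      (if isUD (x p.1) ∧ isUD (x p.2) ∧ y = setTwo x p.1 p.2 (x p.2) (x p.1) then
        (1 : ℝ) else 0))
  -- move 4 : reverse an adjacent pair consisting of one of {U,D} and one of {H,I}
  + (1/4) * (1/((m : ℝ) - 1)) * (1/2) *
    (∑ p ∈ adjPairs m,
      (if ((isUD (x p.1) ∧ isHI (x p.2)) ∨ (isHI (x p.1) ∧ isUD (x p.2))) ∧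
          y = setTwo x p.1 p.2 (x p.2) (x p.1) then (1 : ℝ) else 0))

/-- The transition matrix of the Markov chain `M` on `𝔐²_m`: off the diagonal
the probability of the corresponding accepted move; proposals that are rejected,
invalid, or coincide with the current state contribute to the holding
probability on the diagonal. -/
noncomputable def transP (α β : ℝ) (m : ℕ) : Matrix (Motzkin2 m) (Motzkin2 m) ℝ :=
  fun x y =>
    if x = y then
      1 - ∑ z : Motzkin2 m, (if z = x then 0 else stepWeight α β x.1 z.1)
    else stepWeight α β x.1 y.1

/-- The Gibbs distribution `π(x) = e^{-E(x)}/Z` on `𝔐²_m`. -/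
noncomputable def gibbs (α β : ℝ) (m : ℕ) (x : Motzkin2 m) : ℝ :=
  Real.exp (-(energy α β x.1)) / ∑ y : Motzkin2 m, Real.exp (-(energy α β y.1))

/-- The spectral gap `1 - |λ₁|` of a transition matrix: one minus the largest
absolute value of an eigenvalue different from `λ₀ = 1`. -/
noncomputable def spectralGap {n : Type*} [Fintype n] [DecidableEq n]
    (P : Matrix n n ℝ) : ℝ :=
  1 - sSup {r : ℝ | ∃ μ : ℂ,
    μ ∈ spectrum ℂ (P.map (fun t => (t : ℂ))) ∧ μ ≠ 1 ∧ r = ‖μ‖}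

section Aux
open MSym

lemma symCount_eq_sum {m : ℕ} (x : Fin m → MSym) (a : MSym) :
    (symCount x a : ℝ) = ∑ i : Fin m, (if x i = a then (1:ℝ) else 0) := by
  rw [symCount, Finset.card_filter]
  push_cast
  rfl

lemma symCount_update {m : ℕ} (x : Fin m → MSym) (i : Fin m) (c a : MSym) :
    (symCount (Function.update x i c) a : ℝ) =
      (symCount x a : ℝ) + (if c = a then 1 else 0) - (if x i = a then 1 else 0) := by
  rw [symCount_eq_sum, symCount_eq_sum]
  have h1 : (fun j => (if Function.update x i c j = a then (1:ℝ) else 0))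
      = Function.update (fun j => (if x j = a then (1:ℝ) else 0)) i
          (if c = a then 1 else 0) := by
    funext j
    by_cases h : j = i
    · subst h; simp
    · simp [Function.update_of_ne h]
  rw [h1, Finset.sum_update_of_mem (Finset.mem_univ i)]
  have h2 : ∑ j : Fin m, (if x j = a then (1:ℝ) else 0)
      = (if x i = a then (1:ℝ) else 0) + ∑ j ∈ Finset.univ \ {i}, (if x j = a then (1:ℝ) else 0) := by
    exact Finset.sum_eq_add_sum_sdiff_singleton_of_mem (Finset.mem_univ i) _
  rw [h2]; ring

lemma symCount_setTwo {m : ℕ} (x : Fin m → MSym) {i j : Fin m} (hij : i ≠ j)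
    (c d a : MSym) :
    (symCount (setTwo x i j c d) a : ℝ) =
      (symCount x a : ℝ) + (if c = a then 1 else 0) - (if x i = a then 1 else 0)
        + (if d = a then 1 else 0) - (if x j = a then 1 else 0) := by
  rw [setTwo, symCount_update, symCount_update, Function.update_of_ne (Ne.symm hij)]

end Aux
section Flip
open MSym

lemma setTwo_apply_fst {m : ℕ} (x : Fin m → MSym) {i j : Fin m} (hij : i ≠ j) (a b : MSym) :
    setTwo x i j a b i = a := by
  simp [setTwo, Function.update_of_ne hij]

lemma setTwo_apply_snd {m : ℕ} (x : Fin m → MSym) (i j : Fin m) (a b : MSym) :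
    setTwo x i j a b j = b := by simp [setTwo]

lemma setTwo_apply_other {m : ℕ} (x : Fin m → MSym) {i j k : Fin m} (hki : k ≠ i)
    (hkj : k ≠ j) (a b : MSym) : setTwo x i j a b k = x k := by
  simp [setTwo, Function.update_of_ne hki, Function.update_of_ne hkj]

lemma flipTwo {m : ℕ} {x y : Fin m → MSym} {i j : Fin m} (hij : i ≠ j) {a b a' b' : MSym}
    (h1 : x i = a) (h2 : x j = b) (hy : y = setTwo x i j a' b') :
    y i = a' ∧ y j = b' ∧ x = setTwo y i j a b := by
  subst hy
  refine ⟨setTwo_apply_fst x hij a' b', setTwo_apply_snd x i j a' b', ?_⟩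
  funext k
  by_cases hkj : k = j
  · subst hkj; rw [setTwo_apply_snd, h2]
  by_cases hki : k = i
  · subst hki; rw [setTwo_apply_fst _ hij, h1]
  · rw [setTwo_apply_other _ hki hkj, setTwo_apply_other _ hki hkj]

lemma flip_update {m : ℕ} {x y : Fin m → MSym} {i : Fin m} {a a' : MSym}
    (h1 : x i = a) (hy : y = Function.update x i a') :
    y i = a' ∧ x = Function.update y i a := by
  subst hy
  refine ⟨by simp, ?_⟩
  rw [Function.update_idem, ← h1, Function.update_eq_self]

lemma setTwo_diag {m : ℕ} (x : Fin m → MSym) (i : Fin m) :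
    setTwo x i i (x i) (x i) = x := by
  funext k
  by_cases h : k = i
  · subst h; simp [setTwo]
  · simp [setTwo, Function.update_of_ne h]

lemma adjPairs_ne {m : ℕ} {p : Fin m × Fin m} (hp : p ∈ adjPairs m) : p.1 ≠ p.2 := by
  have h := (Finset.mem_filter.1 hp).2
  intro he
  rw [← he] at h
  omega

end Flip

section Energy
open MSym

lemma energy_UD_HH (α β : ℝ) {m : ℕ} {x : Fin m → MSym} {i j : Fin m} (hij : i ≠ j)
    (h1 : x i = U) (h2 : x j = D) :
    energy α β (setTwo x i j H H) = energy α β x + α := by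
  simp only [energy, symCount_setTwo x hij]
  simp [h1, h2]
  ring

lemma energy_setTwo_swap (α β : ℝ) {m : ℕ} (x : Fin m → MSym) {i j : Fin m} (hij : i ≠ j) :
    energy α β (setTwo x i j (x j) (x i)) = energy α β x := by
  simp only [energy, symCount_setTwo x hij]
  ring

lemma energy_I_H (α β : ℝ) {m : ℕ} {x : Fin m → MSym} {i : Fin m} (h1 : x i = I) :
    energy α β (Function.update x i H) = energy α β x + α - β := by
  simp only [energy, symCount_update]
  simp [h1]
  ring

end Energy
section Balance
open MSym

private lemma bal1_core (α β : ℝ) {m : ℕ} {x y : Fin m → MSym} {p : Fin m × Fin m}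
    (hp : p.1 ≠ p.2) (h1 : x p.1 = U) (h2 : x p.2 = D) (hy : y = setTwo x p.1 p.2 H H) :
    Real.exp (-(energy α β x)) *
      ((if x p.1 = U ∧ x p.2 = D ∧ y = setTwo x p.1 p.2 H H then
          Real.exp (-α) / (1 + Real.exp (-α)) else 0) +
       (if x p.1 = H ∧ x p.2 = H ∧ y = setTwo x p.1 p.2 U D then
          1 / (1 + Real.exp (-α)) else 0)) =
    Real.exp (-(energy α β y)) *
      ((if y p.1 = U ∧ y p.2 = D ∧ x = setTwo y p.1 p.2 H H then
          Real.exp (-α) / (1 + Real.exp (-α)) else 0) +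
       (if y p.1 = H ∧ y p.2 = H ∧ x = setTwo y p.1 p.2 U D then
          1 / (1 + Real.exp (-α)) else 0)) := by
  obtain ⟨hy1, hy2, hx⟩ := flipTwo hp h1 h2 hy
  have hE : energy α β y = energy α β x + α := by
    rw [hy, energy_UD_HH α β hp h1 h2]
  rw [if_pos ⟨h1, h2, hy⟩, if_neg (by simp [h1]), if_neg (by simp [hy1]),
    if_pos ⟨hy1, hy2, hx⟩, hE, neg_add, Real.exp_add]
  ring

lemma bal1 (α β : ℝ) {m : ℕ} (x y : Fin m → MSym) {p : Fin m × Fin m}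
    (hp : p.1 ≠ p.2) :
    Real.exp (-(energy α β x)) *
      ((if x p.1 = U ∧ x p.2 = D ∧ y = setTwo x p.1 p.2 H H then
          Real.exp (-α) / (1 + Real.exp (-α)) else 0) +
       (if x p.1 = H ∧ x p.2 = H ∧ y = setTwo x p.1 p.2 U D then
          1 / (1 + Real.exp (-α)) else 0)) =
    Real.exp (-(energy α β y)) *
      ((if y p.1 = U ∧ y p.2 = D ∧ x = setTwo y p.1 p.2 H H then
          Real.exp (-α) / (1 + Real.exp (-α)) else 0) +
       (if y p.1 = H ∧ y p.2 = H ∧ x = setTwo y p.1 p.2 U D then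
          1 / (1 + Real.exp (-α)) else 0)) := by
  by_cases hA : x p.1 = U ∧ x p.2 = D ∧ y = setTwo x p.1 p.2 H H
  · exact bal1_core α β hp hA.1 hA.2.1 hA.2.2
  by_cases hB : y p.1 = U ∧ y p.2 = D ∧ x = setTwo y p.1 p.2 H H
  · exact (bal1_core α β hp hB.1 hB.2.1 hB.2.2).symm
  have hA2 : ¬(x p.1 = H ∧ x p.2 = H ∧ y = setTwo x p.1 p.2 U D) := by
    intro h
    exact hB (flipTwo hp h.1 h.2.1 h.2.2)
  have hB2 : ¬(y p.1 = H ∧ y p.2 = H ∧ x = setTwo y p.1 p.2 U D) := by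
    intro h
    exact hA (flipTwo hp h.1 h.2.1 h.2.2)
  rw [if_neg hA, if_neg hA2, if_neg hB, if_neg hB2]
  ring

private lemma bal2_core (α β : ℝ) {m : ℕ} {x y : Fin m → MSym} {i : Fin m}
    (h1 : x i = I) (hy : y = Function.update x i H) :
    Real.exp (-(energy α β x)) *
      ((if x i = I ∧ y = Function.update x i H then
          Real.exp (-α) / (Real.exp (-α) + Real.exp (-β)) else 0) +
       (if x i = H ∧ y = Function.update x i I then
          Real.exp (-β) / (Real.exp (-α) + Real.exp (-β)) else 0)) =
    Real.exp (-(energy α β y)) *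
      ((if y i = I ∧ x = Function.update y i H then
          Real.exp (-α) / (Real.exp (-α) + Real.exp (-β)) else 0) +
       (if y i = H ∧ x = Function.update y i I then
          Real.exp (-β) / (Real.exp (-α) + Real.exp (-β)) else 0)) := by
  obtain ⟨hy1, hx⟩ := flip_update h1 hy
  have hE : energy α β y = energy α β x + α - β := by
    rw [hy, energy_I_H α β h1]
  have hb : Real.exp β * Real.exp (-β) = 1 := by
    rw [← Real.exp_add, add_neg_cancel, Real.exp_zero]
  have hE' : Real.exp (-(energy α β y)) =
      Real.exp (-(energy α β x)) * (Real.exp (-α) * Real.exp β) := by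
    rw [hE, ← Real.exp_add, ← Real.exp_add]
    exact congrArg Real.exp (by ring)
  rw [if_pos ⟨h1, hy⟩, if_neg (by simp [h1]), if_neg (by simp [hy1]),
    if_pos ⟨hy1, hx⟩, hE']
  linear_combination (-(Real.exp (-(energy α β x)) * Real.exp (-α) /
    (Real.exp (-α) + Real.exp (-β)))) * hb

lemma bal2 (α β : ℝ) {m : ℕ} (x y : Fin m → MSym) (i : Fin m) :
    Real.exp (-(energy α β x)) *
      ((if x i = I ∧ y = Function.update x i H then
          Real.exp (-α) / (Real.exp (-α) + Real.exp (-β)) else 0) +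
       (if x i = H ∧ y = Function.update x i I then
          Real.exp (-β) / (Real.exp (-α) + Real.exp (-β)) else 0)) =
    Real.exp (-(energy α β y)) *
      ((if y i = I ∧ x = Function.update y i H then
          Real.exp (-α) / (Real.exp (-α) + Real.exp (-β)) else 0) +
       (if y i = H ∧ x = Function.update y i I then
          Real.exp (-β) / (Real.exp (-α) + Real.exp (-β)) else 0)) := by
  by_cases hA : x i = I ∧ y = Function.update x i H
  · exact bal2_core α β hA.1 hA.2
  by_cases hB : y i = I ∧ x = Function.update y i H
  · exact (bal2_core α β hB.1 hB.2).symm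
  have hA2 : ¬(x i = H ∧ y = Function.update x i I) := by
    intro h; exact hB (flip_update h.1 h.2)
  have hB2 : ¬(y i = H ∧ x = Function.update y i I) := by
    intro h; exact hA (flip_update h.1 h.2)
  rw [if_neg hA, if_neg hA2, if_neg hB, if_neg hB2]
  ring

private lemma bal3_core (α β : ℝ) {m : ℕ} {x y : Fin m → MSym} {p : Fin m × Fin m}
    (hA : isUD (x p.1) ∧ isUD (x p.2) ∧ y = setTwo x p.1 p.2 (x p.2) (x p.1)) :
    Real.exp (-(energy α β x)) *
      (if isUD (x p.1) ∧ isUD (x p.2) ∧ y = setTwo x p.1 p.2 (x p.2) (x p.1) then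
        (1:ℝ) else 0) =
    Real.exp (-(energy α β y)) *
      (if isUD (y p.1) ∧ isUD (y p.2) ∧ x = setTwo y p.1 p.2 (y p.2) (y p.1) then
        (1:ℝ) else 0) := by
  rcases eq_or_ne p.1 p.2 with h | h
  · have hyx : y = x := by rw [hA.2.2, ← h, setTwo_diag]
    subst hyx; rfl
  · obtain ⟨hy1, hy2, hx⟩ := flipTwo h rfl rfl hA.2.2
    have hB : isUD (y p.1) ∧ isUD (y p.2) ∧ x = setTwo y p.1 p.2 (y p.2) (y p.1) := by
      refine ⟨hy1 ▸ hA.2.1, hy2 ▸ hA.1, ?_⟩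
      rw [hy1, hy2]; exact hx
    have hE : energy α β y = energy α β x := by
      rw [hA.2.2, energy_setTwo_swap α β x h]
    rw [if_pos hA, if_pos hB, hE]

lemma bal3 (α β : ℝ) {m : ℕ} (x y : Fin m → MSym) (p : Fin m × Fin m) :
    Real.exp (-(energy α β x)) *
      (if isUD (x p.1) ∧ isUD (x p.2) ∧ y = setTwo x p.1 p.2 (x p.2) (x p.1) then
        (1:ℝ) else 0) =
    Real.exp (-(energy α β y)) *
      (if isUD (y p.1) ∧ isUD (y p.2) ∧ x = setTwo y p.1 p.2 (y p.2) (y p.1) then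
        (1:ℝ) else 0) := by
  by_cases hA : isUD (x p.1) ∧ isUD (x p.2) ∧ y = setTwo x p.1 p.2 (x p.2) (x p.1)
  · exact bal3_core α β hA
  by_cases hB : isUD (y p.1) ∧ isUD (y p.2) ∧ x = setTwo y p.1 p.2 (y p.2) (y p.1)
  · exact (bal3_core α β hB).symm
  rw [if_neg hA, if_neg hB, mul_zero, mul_zero]

private lemma bal4_core (α β : ℝ) {m : ℕ} {x y : Fin m → MSym} {p : Fin m × Fin m}
    (hp : p.1 ≠ p.2)
    (hA : ((isUD (x p.1) ∧ isHI (x p.2)) ∨ (isHI (x p.1) ∧ isUD (x p.2))) ∧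
        y = setTwo x p.1 p.2 (x p.2) (x p.1)) :
    Real.exp (-(energy α β x)) *
      (if ((isUD (x p.1) ∧ isHI (x p.2)) ∨ (isHI (x p.1) ∧ isUD (x p.2))) ∧
          y = setTwo x p.1 p.2 (x p.2) (x p.1) then (1:ℝ) else 0) =
    Real.exp (-(energy α β y)) *
      (if ((isUD (y p.1) ∧ isHI (y p.2)) ∨ (isHI (y p.1) ∧ isUD (y p.2))) ∧
          x = setTwo y p.1 p.2 (y p.2) (y p.1) then (1:ℝ) else 0) := by
  obtain ⟨hy1, hy2, hx⟩ := flipTwo hp rfl rfl hA.2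
  have hB : ((isUD (y p.1) ∧ isHI (y p.2)) ∨ (isHI (y p.1) ∧ isUD (y p.2))) ∧
      x = setTwo y p.1 p.2 (y p.2) (y p.1) := by
    refine ⟨?_, by rw [hy1, hy2]; exact hx⟩
    rcases hA.1 with ⟨h1, h2⟩ | ⟨h1, h2⟩
    · exact Or.inr ⟨hy1 ▸ h2, hy2 ▸ h1⟩
    · exact Or.inl ⟨hy1 ▸ h2, hy2 ▸ h1⟩
  have hE : energy α β y = energy α β x := by
    rw [hA.2, energy_setTwo_swap α β x hp]
  rw [if_pos hA, if_pos hB, hE]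

lemma bal4 (α β : ℝ) {m : ℕ} (x y : Fin m → MSym) {p : Fin m × Fin m}
    (hp : p.1 ≠ p.2) :
    Real.exp (-(energy α β x)) *
      (if ((isUD (x p.1) ∧ isHI (x p.2)) ∨ (isHI (x p.1) ∧ isUD (x p.2))) ∧
          y = setTwo x p.1 p.2 (x p.2) (x p.1) then (1:ℝ) else 0) =
    Real.exp (-(energy α β y)) *
      (if ((isUD (y p.1) ∧ isHI (y p.2)) ∨ (isHI (y p.1) ∧ isUD (y p.2))) ∧
          x = setTwo y p.1 p.2 (y p.2) (y p.1) then (1:ℝ) else 0) := by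
  by_cases hA : ((isUD (x p.1) ∧ isHI (x p.2)) ∨ (isHI (x p.1) ∧ isUD (x p.2))) ∧
      y = setTwo x p.1 p.2 (x p.2) (x p.1)
  · exact bal4_core α β hp hA
  by_cases hB : ((isUD (y p.1) ∧ isHI (y p.2)) ∨ (isHI (y p.1) ∧ isUD (y p.2))) ∧
      x = setTwo y p.1 p.2 (y p.2) (y p.1)
  · exact (bal4_core α β hp hB).symm
  rw [if_neg hA, if_neg hB, mul_zero, mul_zero]

end Balance
section StepWeight
open MSym

lemma stepWeight_balance (α β : ℝ) {m : ℕ} (x y : Fin m → MSym) :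
    Real.exp (-(energy α β x)) * stepWeight α β x y
      = Real.exp (-(energy α β y)) * stepWeight α β y x := by
  have e1 : Real.exp (-(energy α β x)) *
      (∑ p ∈ adjPairs m,
        ((if x p.1 = MSym.U ∧ x p.2 = MSym.D ∧ y = setTwo x p.1 p.2 MSym.H MSym.H then
            Real.exp (-α) / (1 + Real.exp (-α)) else 0) +
         (if x p.1 = MSym.H ∧ x p.2 = MSym.H ∧ y = setTwo x p.1 p.2 MSym.U MSym.D then
            1 / (1 + Real.exp (-α)) else 0))) =
      Real.exp (-(energy α β y)) *
      (∑ p ∈ adjPairs m,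
        ((if y p.1 = MSym.U ∧ y p.2 = MSym.D ∧ x = setTwo y p.1 p.2 MSym.H MSym.H then
            Real.exp (-α) / (1 + Real.exp (-α)) else 0) +
         (if y p.1 = MSym.H ∧ y p.2 = MSym.H ∧ x = setTwo y p.1 p.2 MSym.U MSym.D then
            1 / (1 + Real.exp (-α)) else 0))) := by
    rw [Finset.mul_sum, Finset.mul_sum]
    exact Finset.sum_congr rfl fun p hp => bal1 α β x y (adjPairs_ne hp)
  have e2 : Real.exp (-(energy α β x)) *
      (∑ i : Fin m,
        ((if x i = MSym.I ∧ y = Function.update x i MSym.H then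
            Real.exp (-α) / (Real.exp (-α) + Real.exp (-β)) else 0) +
         (if x i = MSym.H ∧ y = Function.update x i MSym.I then
            Real.exp (-β) / (Real.exp (-α) + Real.exp (-β)) else 0))) =
      Real.exp (-(energy α β y)) *
      (∑ i : Fin m,
        ((if y i = MSym.I ∧ x = Function.update y i MSym.H then
            Real.exp (-α) / (Real.exp (-α) + Real.exp (-β)) else 0) +
         (if y i = MSym.H ∧ x = Function.update y i MSym.I then
            Real.exp (-β) / (Real.exp (-α) + Real.exp (-β)) else 0))) := by
    rw [Finset.mul_sum, Finset.mul_sum]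
    exact Finset.sum_congr rfl fun i _ => bal2 α β x y i
  have e3 : Real.exp (-(energy α β x)) *
      (∑ p : Fin m × Fin m,
        (if isUD (x p.1) ∧ isUD (x p.2) ∧ y = setTwo x p.1 p.2 (x p.2) (x p.1) then
          (1 : ℝ) else 0)) =
      Real.exp (-(energy α β y)) *
      (∑ p : Fin m × Fin m,
        (if isUD (y p.1) ∧ isUD (y p.2) ∧ x = setTwo y p.1 p.2 (y p.2) (y p.1) then
          (1 : ℝ) else 0)) := by
    rw [Finset.mul_sum, Finset.mul_sum]
    exact Finset.sum_congr rfl fun p _ => bal3 α β x y p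
  have e4 : Real.exp (-(energy α β x)) *
      (∑ p ∈ adjPairs m,
        (if ((isUD (x p.1) ∧ isHI (x p.2)) ∨ (isHI (x p.1) ∧ isUD (x p.2))) ∧
            y = setTwo x p.1 p.2 (x p.2) (x p.1) then (1 : ℝ) else 0)) =
      Real.exp (-(energy α β y)) *
      (∑ p ∈ adjPairs m,
        (if ((isUD (y p.1) ∧ isHI (y p.2)) ∨ (isHI (y p.1) ∧ isUD (y p.2))) ∧
            x = setTwo y p.1 p.2 (y p.2) (y p.1) then (1 : ℝ) else 0)) := by
    rw [Finset.mul_sum, Finset.mul_sum]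
    exact Finset.sum_congr rfl fun p hp => bal4 α β x y (adjPairs_ne hp)
  simp only [stepWeight]
  linear_combination ((1:ℝ)/4 * (1/((m:ℝ)-1)) * (1/2)) * e1 +
    ((1:ℝ)/4 * (1/(m:ℝ)) * (1/2)) * e2 +
    ((1:ℝ)/4 * (1/((m:ℝ)*(m:ℝ))) * (1/2)) * e3 +
    ((1:ℝ)/4 * (1/((m:ℝ)-1)) * (1/2)) * e4

lemma stepWeight_nonneg (α β : ℝ) {m : ℕ} (hm : 1 ≤ m) (x y : Fin m → MSym) :
    0 ≤ stepWeight α β x y := by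
  have hm1 : (0:ℝ) ≤ (m:ℝ) - 1 := by
    have : (1:ℝ) ≤ (m:ℝ) := by exact_mod_cast hm
    linarith
  have hc1 : (0:ℝ) ≤ (1/4) * (1/((m:ℝ)-1)) * (1/2) := by
    apply mul_nonneg (mul_nonneg (by norm_num) (by positivity)) (by norm_num)
  have hc2 : (0:ℝ) ≤ (1/4) * (1/(m:ℝ)) * (1/2) := by positivity
  have hc3 : (0:ℝ) ≤ (1/4) * (1/((m:ℝ)*(m:ℝ))) * (1/2) := by positivity
  unfold stepWeight
  refine add_nonneg (add_nonneg (add_nonneg ?_ ?_) ?_) ?_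
  · refine mul_nonneg hc1 (Finset.sum_nonneg fun p _ => add_nonneg ?_ ?_) <;>
    · split_ifs <;> positivity
  · refine mul_nonneg hc2 (Finset.sum_nonneg fun i _ => add_nonneg ?_ ?_) <;>
    · split_ifs <;> positivity
  · refine mul_nonneg hc3 (Finset.sum_nonneg fun p _ => ?_)
    split_ifs <;> norm_num
  · refine mul_nonneg hc1 (Finset.sum_nonneg fun p _ => ?_)
    split_ifs <;> norm_num

end StepWeight
section SumBound
open MSym

lemma card_adjPairs_le (m : ℕ) : (adjPairs m).card ≤ m - 1 := by
  have h := Finset.card_le_card_of_injOn (f := fun p : Fin m × Fin m => (p.1 : ℕ))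
    (s := adjPairs m) (t := Finset.range (m-1))
    (by
      intro p hp
      have h1 := (Finset.mem_filter.1 hp).2
      have h2 := p.2.isLt
      simp only [Finset.mem_coe, Finset.mem_range]
      omega)
    (by
      intro p hp q hq hpq
      have h1 := (Finset.mem_filter.1 hp).2
      have h2 := (Finset.mem_filter.1 hq).2
      have hpq' : (p.1 : ℕ) = (q.1 : ℕ) := hpq
      rw [Prod.ext_iff]
      constructor <;> apply Fin.ext <;> omega)
  simpa using h

lemma card_adjPairs_real {m : ℕ} (hm : 1 ≤ m) : ((adjPairs m).card : ℝ) ≤ (m:ℝ) - 1 := by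
  have h := card_adjPairs_le m
  have : ((adjPairs m).card : ℝ) ≤ ((m - 1 : ℕ) : ℝ) := by exact_mod_cast h
  push_cast [hm] at this
  linarith

lemma sum_ite_le_of_pin {m : ℕ} {c : ℝ} (hc : 0 ≤ c) {P : Motzkin2 m → Prop}
    [DecidablePred P] {w : Fin m → MSym} (hP : ∀ z, P z → z.1 = w) :
    ∑ z : Motzkin2 m, (if P z then c else 0) ≤ c := by
  classical
  rw [← Finset.sum_filter, Finset.sum_const, nsmul_eq_mul]
  have hcard : (Finset.univ.filter (fun z : Motzkin2 m => P z)).card ≤ 1 := by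
    apply Finset.card_le_one.mpr
    intro a ha b hb
    exact Subtype.ext
      ((hP a (Finset.mem_filter.1 ha).2).trans (hP b (Finset.mem_filter.1 hb).2).symm)
  calc ((Finset.univ.filter (fun z : Motzkin2 m => P z)).card : ℝ) * c ≤ 1 * c := by
        apply mul_le_mul_of_nonneg_right _ hc
        exact_mod_cast hcard
    _ = c := one_mul c

end SumBound
section TotalBound
open MSym

lemma one_div_mul_self_le {t : ℝ} (ht : 0 ≤ t) : 1/t * t ≤ 1 := by
  rcases eq_or_lt_of_le ht with h | h
  · simp [← h]
  · rw [one_div, inv_mul_cancel₀ (ne_of_gt h)]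

lemma sum_stepWeight_le (α β : ℝ) {m : ℕ} (hm : 1 ≤ m) (x : Fin m → MSym) :
    ∑ z : Motzkin2 m, stepWeight α β x z.1 ≤ 1/2 := by
  classical
  have hmR : (1:ℝ) ≤ (m:ℝ) := by exact_mod_cast hm
  have hm1 : (0:ℝ) ≤ (m:ℝ) - 1 := by linarith
  have hS : (0:ℝ) < 1 + Real.exp (-α) := by positivity
  have hS2 : (0:ℝ) < Real.exp (-α) + Real.exp (-β) := by positivity
  have hc1 : (0:ℝ) ≤ (1/4) * (1/((m:ℝ)-1)) * (1/2) := by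
    apply mul_nonneg (mul_nonneg (by norm_num) (by positivity)) (by norm_num)
  have h1 : ∑ z : Motzkin2 m,
      (∑ p ∈ adjPairs m,
        ((if x p.1 = MSym.U ∧ x p.2 = MSym.D ∧ z.1 = setTwo x p.1 p.2 MSym.H MSym.H then
            Real.exp (-α) / (1 + Real.exp (-α)) else 0) +
         (if x p.1 = MSym.H ∧ x p.2 = MSym.H ∧ z.1 = setTwo x p.1 p.2 MSym.U MSym.D then
            1 / (1 + Real.exp (-α)) else 0))) ≤ (m:ℝ) - 1 := by
    rw [Finset.sum_comm]
    calc ∑ p ∈ adjPairs m, ∑ z : Motzkin2 m, _ ≤ ∑ p ∈ adjPairs m, (1:ℝ) := by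
          apply Finset.sum_le_sum
          intro p _
          rw [Finset.sum_add_distrib]
          have b1 := sum_ite_le_of_pin (m := m)
            (c := Real.exp (-α) / (1 + Real.exp (-α))) (by positivity)
            (P := fun z => x p.1 = MSym.U ∧ x p.2 = MSym.D ∧
              z.1 = setTwo x p.1 p.2 MSym.H MSym.H)
            (w := setTwo x p.1 p.2 MSym.H MSym.H) (fun z hz => hz.2.2)
          have b2 := sum_ite_le_of_pin (m := m)
            (c := 1 / (1 + Real.exp (-α))) (by positivity)
            (P := fun z => x p.1 = MSym.H ∧ x p.2 = MSym.H ∧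
              z.1 = setTwo x p.1 p.2 MSym.U MSym.D)
            (w := setTwo x p.1 p.2 MSym.U MSym.D) (fun z hz => hz.2.2)
          have hsum : Real.exp (-α) / (1 + Real.exp (-α)) + 1 / (1 + Real.exp (-α)) = 1 := by
            field_simp
            ring
          linarith
      _ = ((adjPairs m).card : ℝ) := by rw [Finset.sum_const, nsmul_eq_mul, mul_one]
      _ ≤ (m:ℝ) - 1 := card_adjPairs_real hm
  have h2 : ∑ z : Motzkin2 m,
      (∑ i : Fin m,
        ((if x i = MSym.I ∧ z.1 = Function.update x i MSym.H then
            Real.exp (-α) / (Real.exp (-α) + Real.exp (-β)) else 0) +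
         (if x i = MSym.H ∧ z.1 = Function.update x i MSym.I then
            Real.exp (-β) / (Real.exp (-α) + Real.exp (-β)) else 0))) ≤ (m:ℝ) := by
    rw [Finset.sum_comm]
    calc ∑ i : Fin m, ∑ z : Motzkin2 m, _ ≤ ∑ _i : Fin m, (1:ℝ) := by
          apply Finset.sum_le_sum
          intro i _
          rw [Finset.sum_add_distrib]
          have b1 := sum_ite_le_of_pin (m := m)
            (c := Real.exp (-α) / (Real.exp (-α) + Real.exp (-β))) (by positivity)
            (P := fun z => x i = MSym.I ∧ z.1 = Function.update x i MSym.H)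
            (w := Function.update x i MSym.H) (fun z hz => hz.2)
          have b2 := sum_ite_le_of_pin (m := m)
            (c := Real.exp (-β) / (Real.exp (-α) + Real.exp (-β))) (by positivity)
            (P := fun z => x i = MSym.H ∧ z.1 = Function.update x i MSym.I)
            (w := Function.update x i MSym.I) (fun z hz => hz.2)
          have hsum : Real.exp (-α) / (Real.exp (-α) + Real.exp (-β)) +
              Real.exp (-β) / (Real.exp (-α) + Real.exp (-β)) = 1 := by
            field_simp
          linarith
      _ = (m:ℝ) := by simp
  have h3 : ∑ z : Motzkin2 m,
      (∑ p : Fin m × Fin m,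
        (if isUD (x p.1) ∧ isUD (x p.2) ∧ z.1 = setTwo x p.1 p.2 (x p.2) (x p.1) then
          (1:ℝ) else 0)) ≤ (m:ℝ) * (m:ℝ) := by
    rw [Finset.sum_comm]
    calc ∑ p : Fin m × Fin m, ∑ z : Motzkin2 m, _ ≤ ∑ _p : Fin m × Fin m, (1:ℝ) := by
          apply Finset.sum_le_sum
          intro p _
          exact sum_ite_le_of_pin (by norm_num)
            (P := fun z => isUD (x p.1) ∧ isUD (x p.2) ∧
              z.1 = setTwo x p.1 p.2 (x p.2) (x p.1))
            (w := setTwo x p.1 p.2 (x p.2) (x p.1)) (fun z hz => hz.2.2)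
      _ = (m:ℝ) * (m:ℝ) := by simp [mul_comm]
  have h4 : ∑ z : Motzkin2 m,
      (∑ p ∈ adjPairs m,
        (if ((isUD (x p.1) ∧ isHI (x p.2)) ∨ (isHI (x p.1) ∧ isUD (x p.2))) ∧
            z.1 = setTwo x p.1 p.2 (x p.2) (x p.1) then (1:ℝ) else 0)) ≤ (m:ℝ) - 1 := by
    rw [Finset.sum_comm]
    calc ∑ p ∈ adjPairs m, ∑ z : Motzkin2 m, _ ≤ ∑ p ∈ adjPairs m, (1:ℝ) := by
          apply Finset.sum_le_sum
          intro p _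
          exact sum_ite_le_of_pin (by norm_num)
            (P := fun z => ((isUD (x p.1) ∧ isHI (x p.2)) ∨ (isHI (x p.1) ∧ isUD (x p.2))) ∧
              z.1 = setTwo x p.1 p.2 (x p.2) (x p.1))
            (w := setTwo x p.1 p.2 (x p.2) (x p.1)) (fun z hz => hz.2)
      _ = ((adjPairs m).card : ℝ) := by rw [Finset.sum_const, nsmul_eq_mul, mul_one]
      _ ≤ (m:ℝ) - 1 := card_adjPairs_real hm
  simp only [stepWeight]
  rw [Finset.sum_add_distrib, Finset.sum_add_distrib, Finset.sum_add_distrib,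
    ← Finset.mul_sum, ← Finset.mul_sum, ← Finset.mul_sum, ← Finset.mul_sum]
  have k1 := one_div_mul_self_le hm1
  have k2 := one_div_mul_self_le (t := (m:ℝ)) (by linarith)
  have k3 := one_div_mul_self_le (t := (m:ℝ) * (m:ℝ)) (by nlinarith)
  have g1 : (1/4 * (1/((m:ℝ)-1)) * (1/2)) * ((m:ℝ)-1) ≤ 1/8 := by nlinarith
  have g2 : (1/4 * (1/(m:ℝ)) * (1/2)) * (m:ℝ) ≤ 1/8 := by nlinarith
  have g3 : (1/4 * (1/((m:ℝ)*(m:ℝ))) * (1/2)) * ((m:ℝ)*(m:ℝ)) ≤ 1/8 := by nlinarith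
  have hc2 : (0:ℝ) ≤ 1/4 * (1/(m:ℝ)) * (1/2) := by positivity
  have hc3 : (0:ℝ) ≤ 1/4 * (1/((m:ℝ)*(m:ℝ))) * (1/2) := by positivity
  have m1 := mul_le_mul_of_nonneg_left h1 hc1
  have m2 := mul_le_mul_of_nonneg_left h2 hc2
  have m3 := mul_le_mul_of_nonneg_left h3 hc3
  have m4 := mul_le_mul_of_nonneg_left h4 hc1
  linarith

end TotalBound
section TransP
open MSym

def allH (m : ℕ) : Fin m → MSym := fun _ => MSym.H

lemma allH_motzkin (m : ℕ) : IsMotzkin2 (allH m) := by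
  constructor
  · intro j; simp [symCountPrefix, allH]
  · simp [symCount, allH]

instance motzkin2Nonempty (m : ℕ) : Nonempty (Motzkin2 m) :=
  ⟨⟨allH m, allH_motzkin m⟩⟩

lemma Z_pos (α β : ℝ) (m : ℕ) :
    0 < ∑ y : Motzkin2 m, Real.exp (-(energy α β y.1)) :=
  Finset.sum_pos (fun _ _ => Real.exp_pos _) Finset.univ_nonempty

lemma gibbs_pos (α β : ℝ) (m : ℕ) (x : Motzkin2 m) : 0 < gibbs α β m x :=
  div_pos (Real.exp_pos _) (Z_pos α β m)

lemma gibbs_sum (α β : ℝ) (m : ℕ) : ∑ x : Motzkin2 m, gibbs α β m x = 1 := by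
  unfold gibbs
  rw [← Finset.sum_div]
  exact div_self (ne_of_gt (Z_pos α β m))

lemma offdiag_sum_le (α β : ℝ) {m : ℕ} (hm : 1 ≤ m) (x : Motzkin2 m) :
    ∑ z : Motzkin2 m, (if z = x then 0 else stepWeight α β x.1 z.1) ≤ 1/2 := by
  refine le_trans (Finset.sum_le_sum fun z _ => ?_) (sum_stepWeight_le α β hm x.1)
  split_ifs with h
  · exact stepWeight_nonneg α β hm x.1 z.1
  · exact le_refl _

lemma offdiag_sum_nonneg (α β : ℝ) {m : ℕ} (hm : 1 ≤ m) (x : Motzkin2 m) :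
    0 ≤ ∑ z : Motzkin2 m, (if z = x then 0 else stepWeight α β x.1 z.1) := by
  refine Finset.sum_nonneg fun z _ => ?_
  split_ifs with h
  · exact le_refl _
  · exact stepWeight_nonneg α β hm x.1 z.1

lemma transP_diag_ge (α β : ℝ) {m : ℕ} (hm : 1 ≤ m) (x : Motzkin2 m) :
    1/2 ≤ transP α β m x x := by
  rw [transP, if_pos rfl]
  have := offdiag_sum_le α β hm x
  linarith

lemma transP_nonneg (α β : ℝ) {m : ℕ} (hm : 1 ≤ m) (x y : Motzkin2 m) :
    0 ≤ transP α β m x y := by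
  rcases eq_or_ne x y with rfl | hxy
  · linarith [transP_diag_ge α β hm x]
  · rw [transP, if_neg hxy]
    exact stepWeight_nonneg α β hm x.1 y.1

lemma transP_rowsum (α β : ℝ) {m : ℕ} (hm : 1 ≤ m) (x : Motzkin2 m) :
    ∑ z : Motzkin2 m, transP α β m x z = 1 := by
  classical
  have h2 := Finset.add_sum_erase Finset.univ (fun z => transP α β m x z)
    (Finset.mem_univ x)
  have h3 := Finset.add_sum_erase Finset.univ
    (fun z : Motzkin2 m => if z = x then 0 else stepWeight α β x.1 z.1)
    (Finset.mem_univ x)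
  have h1 : ∑ z ∈ Finset.univ.erase x, transP α β m x z
      = ∑ z ∈ Finset.univ.erase x,
          (if z = x then 0 else stepWeight α β x.1 z.1) := by
    apply Finset.sum_congr rfl
    intro z hz
    have hzx : z ≠ x := (Finset.mem_erase.1 hz).1
    rw [transP, if_neg fun h => hzx h.symm, if_neg hzx]
  have h4 : transP α β m x x
      = 1 - ∑ z : Motzkin2 m, (if z = x then 0 else stepWeight α β x.1 z.1) := by
    rw [transP, if_pos rfl]
  simp only [eq_self_iff_true, if_true] at h2 h3
  rw [← h2, h4, h1]
  linarith [h3]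

lemma transP_reversible (α β : ℝ) {m : ℕ} (x y : Motzkin2 m) :
    gibbs α β m x * transP α β m x y = gibbs α β m y * transP α β m y x := by
  rcases eq_or_ne x y with rfl | hxy
  · rfl
  · rw [transP, if_neg hxy, transP, if_neg (Ne.symm hxy)]
    unfold gibbs
    rw [div_mul_eq_mul_div, div_mul_eq_mul_div, stepWeight_balance α β x.1 y.1]

lemma transP_stationary (α β : ℝ) {m : ℕ} (hm : 1 ≤ m) (y : Motzkin2 m) :
    ∑ x : Motzkin2 m, gibbs α β m x * transP α β m x y = gibbs α β m y := by
  calc ∑ x : Motzkin2 m, gibbs α β m x * transP α β m x y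
      = ∑ x : Motzkin2 m, gibbs α β m y * transP α β m y x :=
        Finset.sum_congr rfl fun x _ => transP_reversible α β x y
    _ = gibbs α β m y * ∑ x : Motzkin2 m, transP α β m y x := by rw [Finset.mul_sum]
    _ = gibbs α β m y := by rw [transP_rowsum α β hm, mul_one]

end TransP
section PrefixCounts
open MSym

lemma symCountPrefix_int {m : ℕ} (x : Fin m → MSym) (a : MSym) (q : Fin m) :
    (symCountPrefix x a q : ℤ) = ∑ p : Fin m, (if p ≤ q ∧ x p = a then (1:ℤ) else 0) := by
  rw [symCountPrefix, Finset.card_filter]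
  push_cast
  rfl

lemma symCountPrefix_update_int {m : ℕ} (x : Fin m → MSym) (i : Fin m) (c a : MSym)
    (q : Fin m) :
    (symCountPrefix (Function.update x i c) a q : ℤ) =
      (symCountPrefix x a q : ℤ) + (if i ≤ q ∧ c = a then 1 else 0)
        - (if i ≤ q ∧ x i = a then 1 else 0) := by
  rw [symCountPrefix_int, symCountPrefix_int,
    ← Finset.add_sum_erase Finset.univ
      (fun p => if p ≤ q ∧ Function.update x i c p = a then (1:ℤ) else 0) (Finset.mem_univ i),
    ← Finset.add_sum_erase Finset.univ
      (fun p => if p ≤ q ∧ x p = a then (1:ℤ) else 0) (Finset.mem_univ i)]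
  have he : ∑ p ∈ Finset.univ.erase i,
      (if p ≤ q ∧ Function.update x i c p = a then (1:ℤ) else 0)
      = ∑ p ∈ Finset.univ.erase i, (if p ≤ q ∧ x p = a then (1:ℤ) else 0) := by
    apply Finset.sum_congr rfl
    intro p hp
    rw [Function.update_of_ne (Finset.mem_erase.1 hp).1]
  simp only [he, Function.update_self]
  ring

lemma symCountPrefix_setTwo_int {m : ℕ} (x : Fin m → MSym) {i j : Fin m} (hij : i ≠ j)
    (c d a : MSym) (q : Fin m) :
    (symCountPrefix (setTwo x i j c d) a q : ℤ) =
      (symCountPrefix x a q : ℤ) + (if i ≤ q ∧ c = a then 1 else 0)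
        - (if i ≤ q ∧ x i = a then 1 else 0)
        + (if j ≤ q ∧ d = a then 1 else 0) - (if j ≤ q ∧ x j = a then 1 else 0) := by
  rw [setTwo, symCountPrefix_update_int, symCountPrefix_update_int,
    Function.update_of_ne (Ne.symm hij)]

lemma prefix_le_total {m : ℕ} (x : Fin m → MSym) (a : MSym) (q : Fin m) :
    symCountPrefix x a q ≤ symCount x a := by
  apply Finset.card_le_card
  intro p hp
  rw [Finset.mem_filter] at hp ⊢
  exact ⟨hp.1, hp.2.2⟩

lemma prefix_eq_total_of_all_le {m : ℕ} {x : Fin m → MSym} {a : MSym} {q : Fin m}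
    (h : ∀ p, x p = a → p ≤ q) : symCountPrefix x a q = symCount x a := by
  unfold symCountPrefix symCount
  congr 1
  apply Finset.filter_congr
  intro p _
  simp only [and_iff_right_iff_imp]
  exact h p

lemma prefix_lt_total {m : ℕ} {x : Fin m → MSym} {a : MSym} {q j : Fin m}
    (hj : x j = a) (hjq : ¬ j ≤ q) : symCountPrefix x a q < symCount x a := by
  apply Finset.card_lt_card
  constructor
  · intro p hp
    rw [Finset.mem_filter] at hp ⊢
    exact ⟨hp.1, hp.2.2⟩
  · intro hsub
    have hjmem : j ∈ Finset.univ.filter (fun p => x p = a) := by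
      rw [Finset.mem_filter]; exact ⟨Finset.mem_univ j, hj⟩
    have := hsub hjmem
    rw [Finset.mem_filter] at this
    exact hjq this.2.1

lemma symCount_zero_iff {m : ℕ} (x : Fin m → MSym) (a : MSym) :
    symCount x a = 0 ↔ ∀ p, x p ≠ a := by
  rw [symCount, Finset.card_eq_zero, Finset.filter_eq_empty_iff]
  simp

lemma exists_of_symCount_pos {m : ℕ} {x : Fin m → MSym} {a : MSym}
    (h : 0 < symCount x a) : ∃ p, x p = a := by
  by_contra hc
  push_neg at hc
  rw [← symCount_zero_iff x a] at hc
  omega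

lemma symCount_swap_nat {m : ℕ} (x : Fin m → MSym) {i j : Fin m} (hij : i ≠ j)
    (a : MSym) : symCount (setTwo x i j (x j) (x i)) a = symCount x a := by
  have h := symCount_setTwo x hij (x j) (x i) a
  have : (symCount (setTwo x i j (x j) (x i)) a : ℝ) = (symCount x a : ℝ) := by
    rw [h]; ring
  exact_mod_cast this

end PrefixCounts

section Validity
open MSym

/-- Move 2 (`I → H`) preserves the Motzkin property. -/
lemma motzkin_update_IH {m : ℕ} {x : Fin m → MSym} (hx : IsMotzkin2 x) {i : Fin m}
    (hi : x i = I) : IsMotzkin2 (Function.update x i H) := by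
  constructor
  · intro q
    have hd := symCountPrefix_update_int x i H MSym.D q
    have hu := symCountPrefix_update_int x i H MSym.U q
    have := hx.1 q
    simp [hi] at hd hu
    omega
  · have hd := symCount_update x i H MSym.D
    have hu := symCount_update x i H MSym.U
    have := hx.2
    simp [hi] at hd hu
    have hd' : symCount (Function.update x i H) MSym.D = symCount x MSym.D := by
      exact_mod_cast hd
    have hu' : symCount (Function.update x i H) MSym.U = symCount x MSym.U := by
      exact_mod_cast hu
    omega

/-- Move 1 (`UD → HH`), at a pair `i < j` with `i` the last `U`, preserves
the Motzkin property. -/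
lemma motzkin_UD_HH {m : ℕ} {x : Fin m → MSym} (hx : IsMotzkin2 x) {i j : Fin m}
    (hij : i < j) (hiU : x i = U) (hjD : x j = D) (hiMax : ∀ p, x p = U → p ≤ i) :
    IsMotzkin2 (setTwo x i j H H) := by
  have hne : i ≠ j := ne_of_lt hij
  constructor
  · intro q
    have hd := symCountPrefix_setTwo_int x hne H H MSym.D q
    have hu := symCountPrefix_setTwo_int x hne H H MSym.U q
    have hmot := hx.1 q
    simp [hiU, hjD] at hd hu
    by_cases hiq : i ≤ q
    · by_cases hjq : j ≤ q
      · simp [hiq, hjq] at hd hu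
        omega
      · -- i ≤ q < j : U-prefix drops by one, D-prefix unchanged
        have h1 : symCountPrefix x MSym.U q = symCount x MSym.U :=
          prefix_eq_total_of_all_le (fun p hp => le_trans (hiMax p hp) hiq)
        have h2 : symCountPrefix x MSym.D q < symCount x MSym.D :=
          prefix_lt_total hjD hjq
        have h3 := hx.2
        simp [hiq, hjq] at hd hu
        omega
    · have hjq : ¬ j ≤ q := fun h => hiq (le_trans (le_of_lt hij) h)
      simp [hiq, hjq] at hd hu
      omega
  · have hd := symCount_setTwo x hne H H MSym.D
    have hu := symCount_setTwo x hne H H MSym.U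
    have := hx.2
    simp [hiU, hjD] at hd hu
    have hd' : (symCount (setTwo x i j H H) MSym.D : ℝ) = (symCount x MSym.D : ℝ) - 1 := by
      rw [hd]
    have hu' : (symCount (setTwo x i j H H) MSym.U : ℝ) = (symCount x MSym.U : ℝ) - 1 := by
      rw [hu]
    have hD1 : 1 ≤ symCount x MSym.D := by
      by_contra hc
      have h0 : symCount x MSym.D = 0 := by omega
      rw [symCount_zero_iff] at h0
      exact h0 j hjD
    have hU1 : 1 ≤ symCount x MSym.U := by
      by_contra hc
      have h0 : symCount x MSym.U = 0 := by omega
      rw [symCount_zero_iff] at h0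
      exact h0 i hiU
    have : (symCount (setTwo x i j H H) MSym.U : ℝ) = (symCount (setTwo x i j H H) MSym.D : ℝ) := by
      rw [hd', hu']
      have : (symCount x MSym.U : ℝ) = (symCount x MSym.D : ℝ) := by exact_mod_cast hx.2
      linarith
    exact_mod_cast this

/-- Move 4 (swapping an `H` on the left with a `D` on the right) preserves the
Motzkin property provided all the `U`s lie weakly before position `i ≤ t`. -/
lemma motzkin_swap_HD {m : ℕ} {x : Fin m → MSym} (hx : IsMotzkin2 x) {i t j : Fin m}
    (hit : i ≤ t) (htj : t < j) (htH : x t = H) (hjD : x j = D)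
    (hiMax : ∀ p, x p = U → p ≤ i) :
    IsMotzkin2 (setTwo x t j (x j) (x t)) := by
  have hne : t ≠ j := ne_of_lt htj
  rw [hjD, htH]
  constructor
  · intro q
    have hd := symCountPrefix_setTwo_int x hne MSym.D MSym.H MSym.D q
    have hu := symCountPrefix_setTwo_int x hne MSym.D MSym.H MSym.U q
    have hmot := hx.1 q
    simp [htH, hjD] at hd hu
    by_cases htq : t ≤ q
    · by_cases hjq : j ≤ q
      · simp [htq, hjq] at hd hu
        omega
      · have h1 : symCountPrefix x MSym.U q = symCount x MSym.U :=
          prefix_eq_total_of_all_le (fun p hp => le_trans (hiMax p hp) (le_trans hit htq))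
        have h2 : symCountPrefix x MSym.D q < symCount x MSym.D :=
          prefix_lt_total hjD hjq
        have h3 := hx.2
        have h4 := prefix_le_total x MSym.U q
        simp [htq, hjq] at hd hu
        omega
    · have hjq : ¬ j ≤ q := fun h => htq (le_trans (le_of_lt htj) h)
      simp [htq, hjq] at hd hu
      omega
  · have hd := symCount_swap_nat x hne MSym.D
    have hu := symCount_swap_nat x hne MSym.U
    rw [hjD, htH] at hd hu
    have := hx.2
    omega

end Validity
section Pieces
open MSym

lemma piece1_nonneg (α β : ℝ) {m : ℕ} (hm : 1 ≤ m) (x y : Fin m → MSym) :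
    0 ≤ (1/4 : ℝ) * (1/((m : ℝ) - 1)) * (1/2) *
    (∑ p ∈ adjPairs m,
      ((if x p.1 = MSym.U ∧ x p.2 = MSym.D ∧ y = setTwo x p.1 p.2 MSym.H MSym.H then
          Real.exp (-α) / (1 + Real.exp (-α)) else 0) +
       (if x p.1 = MSym.H ∧ x p.2 = MSym.H ∧ y = setTwo x p.1 p.2 MSym.U MSym.D then
          1 / (1 + Real.exp (-α)) else 0))) := by
  have hm1 : (0:ℝ) ≤ (m:ℝ) - 1 := by
    have : (1:ℝ) ≤ (m:ℝ) := by exact_mod_cast hm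
    linarith
  refine mul_nonneg (mul_nonneg (mul_nonneg (by norm_num) (by positivity)) (by norm_num))
    (Finset.sum_nonneg fun p _ => add_nonneg ?_ ?_) <;>
  · split_ifs <;> positivity

lemma piece2_nonneg (α β : ℝ) {m : ℕ} (x y : Fin m → MSym) :
    0 ≤ (1/4 : ℝ) * (1/(m : ℝ)) * (1/2) *
    (∑ i : Fin m,
      ((if x i = MSym.I ∧ y = Function.update x i MSym.H then
          Real.exp (-α) / (Real.exp (-α) + Real.exp (-β)) else 0) +
       (if x i = MSym.H ∧ y = Function.update x i MSym.I then
          Real.exp (-β) / (Real.exp (-α) + Real.exp (-β)) else 0))) := by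
  refine mul_nonneg (by positivity) (Finset.sum_nonneg fun i _ => add_nonneg ?_ ?_) <;>
  · split_ifs <;> positivity

lemma piece3_nonneg (α β : ℝ) {m : ℕ} (x y : Fin m → MSym) :
    0 ≤ (1/4 : ℝ) * (1/((m : ℝ) * (m : ℝ))) * (1/2) *
    (∑ p : Fin m × Fin m,
      (if isUD (x p.1) ∧ isUD (x p.2) ∧ y = setTwo x p.1 p.2 (x p.2) (x p.1) then
        (1 : ℝ) else 0)) := by
  refine mul_nonneg (by positivity) (Finset.sum_nonneg fun p _ => ?_)
  split_ifs <;> norm_num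

lemma piece4_nonneg (α β : ℝ) {m : ℕ} (hm : 1 ≤ m) (x y : Fin m → MSym) :
    0 ≤ (1/4 : ℝ) * (1/((m : ℝ) - 1)) * (1/2) *
    (∑ p ∈ adjPairs m,
      (if ((isUD (x p.1) ∧ isHI (x p.2)) ∨ (isHI (x p.1) ∧ isUD (x p.2))) ∧
          y = setTwo x p.1 p.2 (x p.2) (x p.1) then (1 : ℝ) else 0)) := by
  have hm1 : (0:ℝ) ≤ (m:ℝ) - 1 := by
    have : (1:ℝ) ≤ (m:ℝ) := by exact_mod_cast hm
    linarith
  refine mul_nonneg (mul_nonneg (mul_nonneg (by norm_num) (by positivity)) (by norm_num))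
    (Finset.sum_nonneg fun p _ => ?_)
  split_ifs <;> norm_num

lemma mem_adjPairs_two_le {m : ℕ} {p : Fin m × Fin m} (hp : p ∈ adjPairs m) : 2 ≤ m := by
  have h := (Finset.mem_filter.1 hp).2
  have := p.2.isLt
  omega

lemma stepWeight_pos_move1 (α β : ℝ) {m : ℕ} {x y : Fin m → MSym} {p : Fin m × Fin m}
    (hp : p ∈ adjPairs m) (h1 : x p.1 = MSym.U) (h2 : x p.2 = MSym.D)
    (hy : y = setTwo x p.1 p.2 MSym.H MSym.H) : 0 < stepWeight α β x y := by
  have hm2 : 2 ≤ m := mem_adjPairs_two_le hp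
  have hm : 1 ≤ m := by omega
  have hm1 : (0:ℝ) < (m:ℝ) - 1 := by
    have : (2:ℝ) ≤ (m:ℝ) := by exact_mod_cast hm2
    linarith
  have hpos : 0 < (1/4 : ℝ) * (1/((m : ℝ) - 1)) * (1/2) *
      (∑ q ∈ adjPairs m,
        ((if x q.1 = MSym.U ∧ x q.2 = MSym.D ∧ y = setTwo x q.1 q.2 MSym.H MSym.H then
            Real.exp (-α) / (1 + Real.exp (-α)) else 0) +
         (if x q.1 = MSym.H ∧ x q.2 = MSym.H ∧ y = setTwo x q.1 q.2 MSym.U MSym.D then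
            1 / (1 + Real.exp (-α)) else 0))) := by
    refine mul_pos (by positivity) ?_
    have hterm : (0:ℝ) <
        ((if x p.1 = MSym.U ∧ x p.2 = MSym.D ∧ y = setTwo x p.1 p.2 MSym.H MSym.H then
            Real.exp (-α) / (1 + Real.exp (-α)) else 0) +
         (if x p.1 = MSym.H ∧ x p.2 = MSym.H ∧ y = setTwo x p.1 p.2 MSym.U MSym.D then
            1 / (1 + Real.exp (-α)) else 0)) := by
      rw [if_pos ⟨h1, h2, hy⟩, if_neg (by simp [h1])]
      positivity
    refine lt_of_lt_of_le hterm ?_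
    apply Finset.single_le_sum _ hp
    intro q _
    refine add_nonneg ?_ ?_ <;> · split_ifs <;> positivity
  have n2 := piece2_nonneg α β x y
  have n3 := piece3_nonneg α β x y
  have n4 := piece4_nonneg α β hm x y
  unfold stepWeight
  linarith

lemma stepWeight_pos_move2 (α β : ℝ) {m : ℕ} {x y : Fin m → MSym} {i : Fin m}
    (h1 : x i = MSym.I) (hy : y = Function.update x i MSym.H) :
    0 < stepWeight α β x y := by
  have hm : 1 ≤ m := by
    have := i.isLt; omega
  have hmR : (0:ℝ) < (m:ℝ) := by
    have : (1:ℝ) ≤ (m:ℝ) := by exact_mod_cast hm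
    linarith
  have hpos : 0 < (1/4 : ℝ) * (1/(m : ℝ)) * (1/2) *
      (∑ q : Fin m,
        ((if x q = MSym.I ∧ y = Function.update x q MSym.H then
            Real.exp (-α) / (Real.exp (-α) + Real.exp (-β)) else 0) +
         (if x q = MSym.H ∧ y = Function.update x q MSym.I then
            Real.exp (-β) / (Real.exp (-α) + Real.exp (-β)) else 0))) := by
    refine mul_pos (by positivity) ?_
    have hterm : (0:ℝ) <
        ((if x i = MSym.I ∧ y = Function.update x i MSym.H then
            Real.exp (-α) / (Real.exp (-α) + Real.exp (-β)) else 0) +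
         (if x i = MSym.H ∧ y = Function.update x i MSym.I then
            Real.exp (-β) / (Real.exp (-α) + Real.exp (-β)) else 0)) := by
      rw [if_pos ⟨h1, hy⟩, if_neg (by simp [h1])]
      positivity
    refine lt_of_lt_of_le hterm ?_
    apply Finset.single_le_sum _ (Finset.mem_univ i)
    intro q _
    refine add_nonneg ?_ ?_ <;> · split_ifs <;> positivity
  have n1 := piece1_nonneg α β hm x y
  have n3 := piece3_nonneg α β x y
  have n4 := piece4_nonneg α β hm x y
  unfold stepWeight
  linarith

lemma stepWeight_pos_move4 (α β : ℝ) {m : ℕ} {x y : Fin m → MSym} {p : Fin m × Fin m}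
    (hp : p ∈ adjPairs m)
    (hc : (isUD (x p.1) ∧ isHI (x p.2)) ∨ (isHI (x p.1) ∧ isUD (x p.2)))
    (hy : y = setTwo x p.1 p.2 (x p.2) (x p.1)) : 0 < stepWeight α β x y := by
  have hm2 : 2 ≤ m := mem_adjPairs_two_le hp
  have hm : 1 ≤ m := by omega
  have hm1 : (0:ℝ) < (m:ℝ) - 1 := by
    have : (2:ℝ) ≤ (m:ℝ) := by exact_mod_cast hm2
    linarith
  have hpos : 0 < (1/4 : ℝ) * (1/((m : ℝ) - 1)) * (1/2) *
      (∑ q ∈ adjPairs m,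
        (if ((isUD (x q.1) ∧ isHI (x q.2)) ∨ (isHI (x q.1) ∧ isUD (x q.2))) ∧
            y = setTwo x q.1 q.2 (x q.2) (x q.1) then (1 : ℝ) else 0)) := by
    refine mul_pos (by positivity) ?_
    have hterm : (0:ℝ) <
        (if ((isUD (x p.1) ∧ isHI (x p.2)) ∨ (isHI (x p.1) ∧ isUD (x p.2))) ∧
            y = setTwo x p.1 p.2 (x p.2) (x p.1) then (1 : ℝ) else 0) := by
      rw [if_pos ⟨hc, hy⟩]
      norm_num
    refine lt_of_lt_of_le hterm ?_
    apply Finset.single_le_sum _ hp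
    intro q _
    split_ifs <;> norm_num
  have n1 := piece1_nonneg α β hm x y
  have n2 := piece2_nonneg α β x y
  have n3 := piece3_nonneg α β x y
  unfold stepWeight
  linarith

end Pieces
section Reach
open MSym

def Reach (α β : ℝ) {m : ℕ} (x y : Motzkin2 m) : Prop :=
  ∃ t : ℕ, 0 < (transP α β m ^ t) x y

lemma pow_apply_nonneg (α β : ℝ) {m : ℕ} (hm : 1 ≤ m) (t : ℕ) (x y : Motzkin2 m) :
    0 ≤ (transP α β m ^ t) x y := by
  induction t generalizing x y with
  | zero =>
    rw [pow_zero, Matrix.one_apply]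
    split_ifs <;> norm_num
  | succ t ih =>
    rw [pow_succ, Matrix.mul_apply]
    exact Finset.sum_nonneg fun w _ => mul_nonneg (ih x w) (transP_nonneg α β hm w y)

lemma pow_rowsum (α β : ℝ) {m : ℕ} (hm : 1 ≤ m) (t : ℕ) (x : Motzkin2 m) :
    ∑ y : Motzkin2 m, (transP α β m ^ t) x y = 1 := by
  induction t generalizing x with
  | zero => simp [Matrix.one_apply]
  | succ t ih =>
    calc ∑ y : Motzkin2 m, (transP α β m ^ (t+1)) x y
        = ∑ y : Motzkin2 m, ∑ w : Motzkin2 m,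
            (transP α β m ^ t) x w * transP α β m w y := by
          apply Finset.sum_congr rfl
          intro y _
          rw [pow_succ, Matrix.mul_apply]
      _ = ∑ w : Motzkin2 m, ∑ y : Motzkin2 m,
            (transP α β m ^ t) x w * transP α β m w y := Finset.sum_comm
      _ = ∑ w : Motzkin2 m, (transP α β m ^ t) x w := by
          apply Finset.sum_congr rfl
          intro w _
          rw [← Finset.mul_sum, transP_rowsum α β hm, mul_one]
      _ = 1 := ih x

lemma reach_refl (α β : ℝ) {m : ℕ} (x : Motzkin2 m) : Reach α β x x :=
  ⟨0, by rw [pow_zero, Matrix.one_apply_eq]; norm_num⟩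

lemma reach_trans (α β : ℝ) {m : ℕ} (hm : 1 ≤ m) {x y z : Motzkin2 m}
    (h1 : Reach α β x y) (h2 : Reach α β y z) : Reach α β x z := by
  obtain ⟨t, ht⟩ := h1
  obtain ⟨s, hs⟩ := h2
  refine ⟨t + s, ?_⟩
  rw [pow_add, Matrix.mul_apply]
  have hterm : 0 < (transP α β m ^ t) x y * (transP α β m ^ s) y z := mul_pos ht hs
  refine lt_of_lt_of_le hterm ?_
  apply Finset.single_le_sum _ (Finset.mem_univ y)
  intro w _
  exact mul_nonneg (pow_apply_nonneg α β hm t x w) (pow_apply_nonneg α β hm s w z)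

lemma reach_step (α β : ℝ) {m : ℕ} {x y : Motzkin2 m} (h : 0 < transP α β m x y) :
    Reach α β x y := ⟨1, by rwa [pow_one]⟩

lemma pow_reversible (α β : ℝ) {m : ℕ} (t : ℕ) :
    ∀ x y : Motzkin2 m, gibbs α β m x * (transP α β m ^ t) x y
      = gibbs α β m y * (transP α β m ^ t) y x := by
  induction t with
  | zero =>
    intro x y
    rcases eq_or_ne x y with rfl | hxy
    · rfl
    · rw [pow_zero, Matrix.one_apply_ne hxy, Matrix.one_apply_ne (Ne.symm hxy)]
      ring
  | succ t ih =>
    intro x y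
    rw [pow_succ, Matrix.mul_apply, Finset.mul_sum]
    conv_rhs => rw [← pow_succ, pow_succ', Matrix.mul_apply, Finset.mul_sum]
    apply Finset.sum_congr rfl
    intro w _
    have h1 := ih x w
    have h2 := transP_reversible α β w y
    linear_combination transP α β m w y * h1 + (transP α β m ^ t) w x * h2

lemma reach_symm (α β : ℝ) {m : ℕ} {x y : Motzkin2 m} (h : Reach α β x y) :
    Reach α β y x := by
  obtain ⟨t, ht⟩ := h
  refine ⟨t, ?_⟩
  have heq := pow_reversible α β t x y
  have h1 : 0 < gibbs α β m x * (transP α β m ^ t) x y :=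
    mul_pos (gibbs_pos α β m x) ht
  rw [heq] at h1
  have hgy := gibbs_pos α β m y
  nlinarith
end Reach
section Path
open MSym

def Good (α β : ℝ) (m k : ℕ) : Prop :=
  ∀ (x : Fin m → MSym) (hx : IsMotzkin2 x), (∀ p, x p ≠ MSym.I) →
    symCount x MSym.U = k → Reach α β ⟨x, hx⟩ ⟨allH m, allH_motzkin m⟩

lemma inner_step (α β : ℝ) {m : ℕ} {k : ℕ} (IH : Good α β m k) :
    ∀ d : ℕ, ∀ (x : Fin m → MSym) (hx : IsMotzkin2 x) (i j : Fin m),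
      x i = MSym.U → (∀ p, x p = MSym.U → p ≤ i) → x j = MSym.D → i < j →
      (∀ p, i < p → p < j → x p = MSym.H) → (∀ p, x p ≠ MSym.I) →
      symCount x MSym.U = k + 1 → (j : ℕ) = (i : ℕ) + 1 + d →
      Reach α β ⟨x, hx⟩ ⟨allH m, allH_motzkin m⟩ := by
  intro d
  induction d with
  | zero =>
    intro x hx i j hiU hiMax hjD hij hbet hnoI hcount hd
    have hm : 1 ≤ m := by have := j.isLt; omega
    have hne : i ≠ j := ne_of_lt hij
    have hy : setTwo x i j MSym.H MSym.H = setTwo x i j MSym.H MSym.H := rfl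
    set y := setTwo x i j MSym.H MSym.H with hydef
    have hyM : IsMotzkin2 y := motzkin_UD_HH hx hij hiU hjD hiMax
    have hxk : (symCount x MSym.U : ℝ) = (k : ℝ) + 1 := by
      rw [hcount]; push_cast; ring
    have hcy : symCount y MSym.U = k := by
      have : (symCount y MSym.U : ℝ) = (k : ℝ) := by
        rw [hydef, symCount_setTwo x hne]
        simp [hiU, hjD]
        linarith
      exact_mod_cast this
    have hnoI' : ∀ p, y p ≠ MSym.I := by
      intro p
      by_cases hpj : p = j
      · subst hpj; rw [hydef, setTwo_apply_snd]; simp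
      by_cases hpi : p = i
      · subst hpi; rw [hydef, setTwo_apply_fst x hne]; simp
      · rw [hydef, setTwo_apply_other x hpi hpj]; exact hnoI p
    have hpadj : ((i, j) : Fin m × Fin m) ∈ adjPairs m := by
      rw [adjPairs, Finset.mem_filter]
      refine ⟨Finset.mem_univ _, ?_⟩
      show (j : ℕ) = (i : ℕ) + 1
      omega
    have hxy : (⟨x, hx⟩ : Motzkin2 m) ≠ ⟨y, hyM⟩ := by
      intro h
      have hval : x = y := congrArg Subtype.val h
      have h2 : x i = y i := congrFun hval i
      rw [hiU, hydef, setTwo_apply_fst x hne] at h2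
      exact MSym.noConfusion h2
    have hstep : 0 < transP α β m ⟨x, hx⟩ ⟨y, hyM⟩ := by
      rw [transP, if_neg hxy]
      exact stepWeight_pos_move1 α β hpadj hiU hjD hydef
    exact reach_trans α β hm (reach_step α β hstep) (IH y hyM hnoI' hcy)
  | succ d ihd =>
    intro x hx i j hiU hiMax hjD hij hbet hnoI hcount hd
    have hm : 1 ≤ m := by have := j.isLt; omega
    have hijval : (i : ℕ) < (j : ℕ) := hij
    set t : Fin m := ⟨(j : ℕ) - 1, by have := j.isLt; omega⟩ with htdef
    have htval : (t : ℕ) = (j : ℕ) - 1 := rfl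
    have hit : i < t := by rw [Fin.lt_def]; omega
    have htj : t < j := by rw [Fin.lt_def]; omega
    have htH : x t = MSym.H := hbet t hit htj
    have hne : t ≠ j := ne_of_lt htj
    set y := setTwo x t j (x j) (x t) with hydef
    have hyM : IsMotzkin2 y := motzkin_swap_HD hx (le_of_lt hit) htj htH hjD hiMax
    have hyt : y t = MSym.D := by rw [hydef, setTwo_apply_fst x hne, hjD]
    have hyj : y j = MSym.H := by rw [hydef, setTwo_apply_snd, htH]
    have hyother : ∀ p, p ≠ t → p ≠ j → y p = x p := fun p h1 h2 =>
      setTwo_apply_other x h1 h2 _ _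
    have hyi : y i = MSym.U := by
      rw [hyother i (ne_of_lt hit) (ne_of_lt hij), hiU]
    have hiMax' : ∀ p, y p = MSym.U → p ≤ i := by
      intro p hp
      by_cases h1 : p = t
      · rw [h1, hyt] at hp; exact absurd hp (by simp)
      by_cases h2 : p = j
      · rw [h2, hyj] at hp; exact absurd hp (by simp)
      · exact hiMax p (by rwa [hyother p h1 h2] at hp)
    have hbet' : ∀ p, i < p → p < t → y p = MSym.H := by
      intro p h1 h2
      rw [hyother p (ne_of_lt h2) (ne_of_lt (lt_trans h2 htj))]
      exact hbet p h1 (lt_trans h2 htj)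
    have hnoI' : ∀ p, y p ≠ MSym.I := by
      intro p
      by_cases h1 : p = t
      · rw [h1, hyt]; simp
      by_cases h2 : p = j
      · rw [h2, hyj]; simp
      · rw [hyother p h1 h2]; exact hnoI p
    have hcy : symCount y MSym.U = k + 1 := by
      rw [hydef, symCount_swap_nat x hne]; exact hcount
    have hpadj : ((t, j) : Fin m × Fin m) ∈ adjPairs m := by
      rw [adjPairs, Finset.mem_filter]
      refine ⟨Finset.mem_univ _, ?_⟩
      show (j : ℕ) = (t : ℕ) + 1
      omega
    have hxy : (⟨x, hx⟩ : Motzkin2 m) ≠ ⟨y, hyM⟩ := by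
      intro h
      have hval : x = y := congrArg Subtype.val h
      have h2 : x t = y t := congrFun hval t
      rw [htH, hyt] at h2
      exact MSym.noConfusion h2
    have hstep : 0 < transP α β m ⟨x, hx⟩ ⟨y, hyM⟩ := by
      rw [transP, if_neg hxy]
      exact stepWeight_pos_move4 α β hpadj (Or.inr ⟨Or.inl htH, Or.inr hjD⟩) hydef
    refine reach_trans α β hm (reach_step α β hstep)
      (ihd y hyM i t hyi hiMax' hyt hit hbet' hnoI' hcy ?_)
    omega

lemma good_all (α β : ℝ) (m : ℕ) : ∀ k, Good α β m k := by
  intro k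
  induction k with
  | zero =>
    intro x hx hnoI hcount
    have hD : symCount x MSym.D = 0 := by have := hx.2; omega
    have hU := (symCount_zero_iff x MSym.U).1 hcount
    have hDn := (symCount_zero_iff x MSym.D).1 hD
    have hxall : x = allH m := by
      funext p
      cases h : x p with
      | U => exact absurd h (hU p)
      | H => rfl
      | I => exact absurd h (hnoI p)
      | D => exact absurd h (hDn p)
    have heq : (⟨x, hx⟩ : Motzkin2 m) = ⟨allH m, allH_motzkin m⟩ := Subtype.ext hxall
    rw [heq]
    exact reach_refl α β _
  | succ k IH =>
    intro x hx hnoI hcount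
    have hUpos : 0 < symCount x MSym.U := by omega
    have hUne : (Finset.univ.filter (fun p => x p = MSym.U)).Nonempty :=
      Finset.card_pos.1 hUpos
    set i := (Finset.univ.filter (fun p => x p = MSym.U)).max' hUne with hidef
    have hiU : x i = MSym.U :=
      (Finset.mem_filter.1 (Finset.max'_mem _ hUne)).2
    have hiMax : ∀ p, x p = MSym.U → p ≤ i := fun p hp =>
      Finset.le_max' _ p (Finset.mem_filter.2 ⟨Finset.mem_univ p, hp⟩)
    have hexD : ∃ p, i < p ∧ x p = MSym.D := by
      by_contra hc
      push_neg at hc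
      have hDpos : 0 < symCount x MSym.D := by have := hx.2; omega
      obtain ⟨q, hq⟩ := exists_of_symCount_pos hDpos
      have hqi : q < i := by
        rcases lt_trichotomy q i with h | h | h
        · exact h
        · rw [h, hiU] at hq; exact absurd hq (by simp)
        · exact absurd hq (hc q h)
      have hival : 1 ≤ (i : ℕ) := by
        rw [Fin.lt_def] at hqi
        omega
      set i' : Fin m := ⟨(i : ℕ) - 1, by have := i.isLt; omega⟩ with hi'def
      have hi'val : (i' : ℕ) = (i : ℕ) - 1 := rfl
      have h1 : symCountPrefix x MSym.D i' = symCount x MSym.D := by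
        apply prefix_eq_total_of_all_le
        intro p hp
        have hpi : p < i := by
          rcases lt_trichotomy p i with h | h | h
          · exact h
          · rw [h, hiU] at hp; exact absurd hp (by simp)
          · exact absurd hp (hc p h)
        rw [Fin.le_def]
        rw [Fin.lt_def] at hpi
        omega
      have h2 : symCountPrefix x MSym.U i' < symCount x MSym.U := by
        apply prefix_lt_total hiU
        rw [Fin.le_def]
        omega
      have h3 := hx.1 i'
      have h4 := hx.2
      omega
    obtain ⟨j0, hj0⟩ := hexD
    have hSne : (Finset.univ.filter (fun p => i < p ∧ x p = MSym.D)).Nonempty :=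
      ⟨j0, Finset.mem_filter.2 ⟨Finset.mem_univ _, hj0⟩⟩
    set j := (Finset.univ.filter (fun p => i < p ∧ x p = MSym.D)).min' hSne with hjdef
    have hjmem := Finset.min'_mem _ hSne
    rw [Finset.mem_filter] at hjmem
    have hij : i < j := hjmem.2.1
    have hjD : x j = MSym.D := hjmem.2.2
    have hjMin : ∀ p, i < p → x p = MSym.D → j ≤ p := fun p h1 h2 =>
      Finset.min'_le _ p (Finset.mem_filter.2 ⟨Finset.mem_univ _, h1, h2⟩)
    have hbet : ∀ p, i < p → p < j → x p = MSym.H := by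
      intro p h1 h2
      cases h : x p with
      | U => exact absurd (hiMax p h) (not_le.2 h1)
      | H => rfl
      | I => exact absurd h (hnoI p)
      | D => exact absurd h2 (not_lt.2 (hjMin p h1 h))
    have hijval : (i : ℕ) < (j : ℕ) := hij
    exact inner_step α β IH ((j : ℕ) - (i : ℕ) - 1) x hx i j hiU hiMax hjD hij hbet
      hnoI hcount (by omega)

lemma reach_allH (α β : ℝ) {m : ℕ} (x : Motzkin2 m) :
    Reach α β x ⟨allH m, allH_motzkin m⟩ := by
  obtain ⟨xf, hxf⟩ := x
  suffices h : ∀ n (x : Fin m → MSym) (hx : IsMotzkin2 x), symCount x MSym.I = n →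
      Reach α β ⟨x, hx⟩ ⟨allH m, allH_motzkin m⟩ from h _ xf hxf rfl
  intro n
  induction n with
  | zero =>
    intro x hx hc
    exact good_all α β m (symCount x MSym.U) x hx ((symCount_zero_iff x MSym.I).1 hc) rfl
  | succ n ih =>
    intro x hx hc
    have hpos : 0 < symCount x MSym.I := by omega
    obtain ⟨i, hi⟩ := exists_of_symCount_pos hpos
    set y := Function.update x i MSym.H with hydef
    have hyM : IsMotzkin2 y := by rw [hydef]; exact motzkin_update_IH hx hi
    have hxn : (symCount x MSym.I : ℝ) = (n : ℝ) + 1 := by rw [hc]; push_cast; ring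
    have hcy : symCount y MSym.I = n := by
      have : (symCount y MSym.I : ℝ) = (n : ℝ) := by
        rw [hydef, symCount_update]
        simp [hi]
        linarith
      exact_mod_cast this
    have hxy : (⟨x, hx⟩ : Motzkin2 m) ≠ ⟨y, hyM⟩ := by
      intro h
      have hval : x = y := congrArg Subtype.val h
      have h2 : x i = y i := congrFun hval i
      rw [hi, hydef, Function.update_self] at h2
      exact MSym.noConfusion h2
    have hstep : 0 < transP α β m ⟨x, hx⟩ ⟨y, hyM⟩ := by
      rw [transP, if_neg hxy]
      exact stepWeight_pos_move2 α β hi hydef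
    have hm : 1 ≤ m := by have := i.isLt; omega
    exact reach_trans α β hm (reach_step α β hstep) (ih y hyM hcy)

lemma chain_irreducible (α β : ℝ) {m : ℕ} (hm : 1 ≤ m) (x y : Motzkin2 m) :
    ∃ t, 0 < (transP α β m ^ t) x y :=
  reach_trans α β hm (reach_allH α β x) (reach_symm α β (reach_allH α β y))

end Path
/-- For every `m ≥ 1` and all real `α, β`, the Markov chain
`M` on `𝔐²_m` is irreducible and aperiodic (the latter phrased via common
divisors: `gcd{t : P^t(x,x) > 0} = 1`), it is reversible with respect to the
Gibbs distribution `π(x) = e^{-E(x)}/Z`, and `π` is its unique stationary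
distribution. -/
theorem motzkin_chain_ergodic_reversible (α β : ℝ) (m : ℕ) (hm : 1 ≤ m) :
    (∀ x y : Motzkin2 m, ∃ t : ℕ, 0 < (transP α β m ^ t) x y) ∧
    (∀ x : Motzkin2 m, ∀ d : ℕ,
      (∀ t : ℕ, 0 < (transP α β m ^ t) x x → d ∣ t) → d ∣ 1) ∧
    (∀ x y : Motzkin2 m,
      gibbs α β m x * transP α β m x y = gibbs α β m y * transP α β m y x) ∧
    (∀ y : Motzkin2 m,
      ∑ x : Motzkin2 m, gibbs α β m x * transP α β m x y = gibbs α β m y) ∧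
    (∀ μ : Motzkin2 m → ℝ, (∀ x, 0 ≤ μ x) → (∑ x : Motzkin2 m, μ x = 1) →
      (∀ y : Motzkin2 m, ∑ x : Motzkin2 m, μ x * transP α β m x y = μ y) →
      μ = gibbs α β m) := by
  refine ⟨chain_irreducible α β hm, ?_, fun x y => transP_reversible α β x y,
    transP_stationary α β hm, ?_⟩
  · -- aperiodicity
    intro x d hdvd
    apply hdvd 1
    rw [pow_one]
    linarith [transP_diag_ge α β hm x]
  · -- uniqueness of the stationary distribution
    intro μ hnn hsum hstat
    have hgpos : ∀ x : Motzkin2 m, 0 < gibbs α β m x := gibbs_pos α β m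
    have key : ∀ y : Motzkin2 m, ∑ x : Motzkin2 m,
        transP α β m y x * (μ x / gibbs α β m x) = μ y / gibbs α β m y := by
      intro y
      have h1 : ∀ x : Motzkin2 m, transP α β m y x * (μ x / gibbs α β m x)
          = (μ x * transP α β m x y) / gibbs α β m y := by
        intro x
        have hr := transP_reversible α β x y
        have hgx := ne_of_gt (hgpos x)
        have hgy := ne_of_gt (hgpos y)
        field_simp
        linear_combination (-(μ x)) * hr
      rw [Finset.sum_congr rfl fun x _ => h1 x, ← Finset.sum_div, hstat y]
    have hpow : ∀ t : ℕ, ∀ y : Motzkin2 m, ∑ x : Motzkin2 m,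
        (transP α β m ^ t) y x * (μ x / gibbs α β m x) = μ y / gibbs α β m y := by
      intro t
      induction t with
      | zero =>
        intro y
        simp [Matrix.one_apply]
      | succ t ih =>
        intro y
        calc ∑ x : Motzkin2 m, (transP α β m ^ (t+1)) y x * (μ x / gibbs α β m x)
            = ∑ x : Motzkin2 m, ∑ w : Motzkin2 m,
                (transP α β m y w * (transP α β m ^ t) w x) * (μ x / gibbs α β m x) := by
              apply Finset.sum_congr rfl
              intro x _
              rw [pow_succ', Matrix.mul_apply, Finset.sum_mul]
          _ = ∑ w : Motzkin2 m, ∑ x : Motzkin2 m,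
                (transP α β m y w * (transP α β m ^ t) w x) * (μ x / gibbs α β m x) :=
              Finset.sum_comm
          _ = ∑ w : Motzkin2 m, transP α β m y w * (μ w / gibbs α β m w) := by
              apply Finset.sum_congr rfl
              intro w _
              simp only [mul_assoc]
              rw [← Finset.mul_sum, ih w]
          _ = μ y / gibbs α β m y := key y
    obtain ⟨x₀, -, hmax⟩ := Finset.exists_max_image Finset.univ
      (fun x : Motzkin2 m => μ x / gibbs α β m x) Finset.univ_nonempty
    have hconst : ∀ z : Motzkin2 m, μ z / gibbs α β m z = μ x₀ / gibbs α β m x₀ := by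
      intro z
      obtain ⟨t, ht⟩ := chain_irreducible α β hm x₀ z
      have hrow := pow_rowsum α β hm t x₀
      have hzero : ∑ x : Motzkin2 m, (transP α β m ^ t) x₀ x *
          (μ x₀ / gibbs α β m x₀ - μ x / gibbs α β m x) = 0 := by
        simp only [mul_sub]
        rw [Finset.sum_sub_distrib, ← Finset.sum_mul, hrow, one_mul, hpow t x₀]
        ring
      have hterm := (Finset.sum_eq_zero_iff_of_nonneg fun x _ =>
        mul_nonneg (pow_apply_nonneg α β hm t x₀ x)
          (sub_nonneg.2 (hmax x (Finset.mem_univ x)))).1 hzero z (Finset.mem_univ z)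
      rcases mul_eq_zero.1 hterm with h | h
      · exact absurd h (ne_of_gt ht)
      · linarith [sub_eq_zero.1 h]
    have hone : μ x₀ / gibbs α β m x₀ = 1 := by
      have h1 : ∑ x : Motzkin2 m, μ x
          = ∑ x : Motzkin2 m, (μ x₀ / gibbs α β m x₀) * gibbs α β m x := by
        apply Finset.sum_congr rfl
        intro x _
        rw [← hconst x, div_mul_cancel₀ _ (ne_of_gt (hgpos x))]
      rw [hsum, ← Finset.mul_sum, gibbs_sum α β m, mul_one] at h1
      exact h1.symm
    funext z
    have hz := hconst z
    rw [hone] at hz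
    have := (div_eq_one_iff_eq (ne_of_gt (hgpos z))).1 hz
    exact this
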